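/- arXiv:2409.17218 — 3 statements merged into one kernel-verified Lean document; each statement's English description precedes it below -/
import Mathlib

section
/- Let P_N be the lattice of set partitions of {1,…,N} and let d(p,q)=#(p)+#(q)−2#(p∨q). Then d is a metric on P_N: for all p,p',p''∈P_N one has d(p,p')≥0 with equality if and only if p=p', d(p,p')=d(p',p), and d(p,p')+d(p',p'')≥d(p,p''). Moreover: (a) d(p,p')≥|#(p)−#(p')| for all p,p'∈P_N; (b) d(p₁,p₂)≥d(p₁∨r,p₂∨r) for all p₁,p₂,r∈P_N. -/
open scoped Classical

noncomputable section

namespace RTN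

/-! ## Set partitions -/

/-- Number of blocks of a set partition (as an integer). -/
def nb {α : Type*} (p : Setoid α) : ℤ := Nat.card (Quotient p)

/-- The partition distance `d(p,q) = #(p) + #(q) - 2 #(p ⊔ q)`. -/
def pdist {α : Type*} (p q : Setoid α) : ℤ := nb p + nb q - 2 * nb (p ⊔ q)

lemma pdist_comm {α : Type*} (p q : Setoid α) : pdist p q = pdist q p := by
  unfold pdist
  rw [sup_comm p q]
  ring

/-- `k` is a singlet (block of size one) of the partition `p`. -/
def IsSinglet {α : Type*} (p : Setoid α) (k : α) : Prop := ∀ y, p.r k y → y = k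

/-- The number of singlets `#₁(p)` of a partition. -/
def nS {α : Type*} (p : Setoid α) : ℤ := Nat.card {k : α // IsSinglet p k}

/-- The singlet distance `d₁(s₁,s₂) = #₁(s₁) + #₁(s₂) - 2 #₁(s₁ ⊔ s₂)`. -/
def sdist {α : Type*} (s₁ s₂ : Setoid α) : ℤ := nS s₁ + nS s₂ - 2 * nS (s₁ ⊔ s₂)

/-- The singlet pattern `s(p)`: the coarsest partition whose singlets are exactly
those of `p` (all non-singlet elements lie in one block). -/
def spat {α : Type*} (p : Setoid α) : Setoid α where
  r x y := x = y ∨ (¬ IsSinglet p x ∧ ¬ IsSinglet p y)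
  iseqv := by
    refine ⟨fun x => Or.inl rfl, ?_, ?_⟩
    · intro x y h
      rcases h with rfl | ⟨hx, hy⟩
      · exact Or.inl rfl
      · exact Or.inr ⟨hy, hx⟩
    · intro x y z h1 h2
      rcases h1 with rfl | ⟨hx, hy⟩
      · exact h2
      · rcases h2 with rfl | ⟨_, hz⟩
        · exact Or.inr ⟨hx, hy⟩
        · exact Or.inr ⟨hx, hz⟩

/-- The bit `b^k(p)`: `0` if `p` has a singlet at `k`, else `1`. -/
def bbit {α : Type*} (p : Setoid α) (k : α) : ℤ := if IsSinglet p k then 0 else 1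

/-- The size of the block of `p` containing `x`. -/
def blockSize {α : Type*} (p : Setoid α) (x : α) : ℕ := Nat.card {y : α // p.r x y}

noncomputable instance {α : Type*} [Finite α] (s : Setoid α) : Fintype (Quotient s) :=
  Fintype.ofFinite _

/-! ## Permutations -/

/-- The partition of `α` into orbits (cycles) of a permutation. -/
def orbitSetoid {α : Type*} (g : Equiv.Perm α) : Setoid α where
  r x y := ∃ k : ℤ, (g ^ k) x = y
  iseqv := by
    refine ⟨fun x => ⟨0, by simp⟩, ?_, ?_⟩
    · rintro x y ⟨k, rfl⟩
      exact ⟨-k, by simp [← Equiv.Perm.mul_apply, ← zpow_add]⟩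
    · rintro x y z ⟨k, rfl⟩ ⟨l, rfl⟩
      exact ⟨l + k, by rw [zpow_add, Equiv.Perm.mul_apply]⟩

/-- The number of cycles `#(g)` of a permutation (fixed points included). -/
def ncyc {α : Type*} (g : Equiv.Perm α) : ℤ := nb (orbitSetoid g)

/-- The Cayley distance `d(g,h) = N - #(g h⁻¹)`. -/
def cayley {α : Type*} [Fintype α] (g h : Equiv.Perm α) : ℤ :=
  (Fintype.card α : ℤ) - ncyc (g * h⁻¹)

lemma orbitSetoid_inv {α : Type*} (g : Equiv.Perm α) : orbitSetoid g⁻¹ = orbitSetoid g := by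
  apply Setoid.ext
  intro x y
  constructor
  · rintro ⟨k, hk⟩
    exact ⟨-k, by rw [← inv_zpow']; exact hk⟩
  · rintro ⟨k, hk⟩
    exact ⟨-k, by rw [inv_zpow', neg_neg]; exact hk⟩

lemma cayley_comm {α : Type*} [Fintype α] (g h : Equiv.Perm α) : cayley g h = cayley h g := by
  unfold cayley ncyc
  rw [show h * g⁻¹ = (g * h⁻¹)⁻¹ by rw [mul_inv_rev, inv_inv], orbitSetoid_inv]

/-- Coarse graining of a partition `p` by the blocks of `P(g₀)`: the partition of the set
of blocks of `P(g₀)` induced by `p ⊔ P(g₀)`. -/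
def coarse {α : Type*} (g₀ : Equiv.Perm α) (p : Setoid α) :
    Setoid (Quotient (orbitSetoid g₀)) where
  r u v := ∃ x y : α, Quotient.mk (orbitSetoid g₀) x = u ∧ Quotient.mk (orbitSetoid g₀) y = v ∧
    (p ⊔ orbitSetoid g₀).r x y
  iseqv := by
    refine ⟨?_, ?_, ?_⟩
    · intro u
      obtain ⟨x, rfl⟩ := Quotient.exists_rep u
      exact ⟨x, x, rfl, rfl, (p ⊔ orbitSetoid g₀).iseqv.refl x⟩
    · rintro u v ⟨x, y, hx, hy, hxy⟩
      exact ⟨y, x, hy, hx, (p ⊔ orbitSetoid g₀).iseqv.symm hxy⟩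
    · rintro u v w ⟨x, y, hx, hy, hxy⟩ ⟨y', z, hy', hz, hyz⟩
      refine ⟨x, z, hx, hz, ?_⟩
      have h1 : (orbitSetoid g₀).r y y' := Quotient.exact (hy.trans hy'.symm)
      have h2 : (p ⊔ orbitSetoid g₀).r y y' :=
        (le_sup_right : orbitSetoid g₀ ≤ p ⊔ orbitSetoid g₀) h1
      exact (p ⊔ orbitSetoid g₀).iseqv.trans hxy
        ((p ⊔ orbitSetoid g₀).iseqv.trans h2 hyz)

/-- The coarse graining `q_{g₀}(g) ∈ P_{#(g₀)}` of a permutation `g`. -/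
def qc {α : Type*} (g₀ g : Equiv.Perm α) : Setoid (Quotient (orbitSetoid g₀)) :=
  coarse g₀ (orbitSetoid g)

/-! ## Standard reflected-entropy boundary elements -/

/-- `g_B`, the product of `n` disjoint `m`-cycles `(k,ℓ) ↦ (k,ℓ+1)`. -/
def gB (n m : ℕ) : Equiv.Perm (Fin n × Fin m) :=
  Equiv.prodCongr (Equiv.refl (Fin n)) (finRotate m)

/-- `γ`, cyclically shifting `k ↦ k+1` on the elements with `ℓ` in the lower half,
fixing the rest. -/
def gamma (n m : ℕ) : Equiv.Perm (Fin n × Fin m) where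
  toFun x := if m / 2 ≤ (x.2 : ℕ) then (finRotate n x.1, x.2) else x
  invFun x := if m / 2 ≤ (x.2 : ℕ) then ((finRotate n).symm x.1, x.2) else x
  left_inv := by
    intro x
    by_cases h : m / 2 ≤ (x.2 : ℕ) <;> simp [h, -finRotate_apply, -finRotate_symm_apply]
  right_inv := by
    intro x
    by_cases h : m / 2 ≤ (x.2 : ℕ) <;> simp [h, -finRotate_apply, -finRotate_symm_apply]

/-- `g_A = γ⁻¹ g_B γ`. -/
def gA (n m : ℕ) : Equiv.Perm (Fin n × Fin m) :=
  (gamma n m)⁻¹ * gB n m * gamma n m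

/-- For even `m`, `Fin m` splits into an upper and a lower half. -/
def halfEquiv (m : ℕ) (hm : m % 2 = 0) : Fin 2 × Fin (m / 2) ≃ Fin m :=
  finProdFinEquiv.trans (finCongr (by omega))

/-- `X`, the product of the `2n` disjoint `(m/2)`-cycles cyclically permuting the
upper and the lower half of each block `k`. -/
def Xel (n m : ℕ) (hm : m % 2 = 0) : Equiv.Perm (Fin n × Fin m) :=
  Equiv.prodCongr (Equiv.refl (Fin n))
    ((halfEquiv m hm).permCongr
      (Equiv.prodCongr (Equiv.refl (Fin 2)) (finRotate (m / 2))))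

/-- The set of blocks of `P(X)`; it has `2n` elements. -/
abbrev BX (n m : ℕ) (hm : m % 2 = 0) := Quotient (orbitSetoid (Xel n m hm))

/-- `q_A = q_X(g_A) ∈ P_{2n}`. -/
def qAel (n m : ℕ) (hm : m % 2 = 0) : Setoid (BX n m hm) :=
  qc (Xel n m hm) (gA n m)

/-- `q_B = q_X(g_B) ∈ P_{2n}`. -/
def qBel (n m : ℕ) (hm : m % 2 = 0) : Setoid (BX n m hm) :=
  qc (Xel n m hm) (gB n m)

/-! ## Doubled elements (two copies) -/

/-- Two copies of the index set `{1,…,mn}`. -/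
abbrev DIdx (n m : ℕ) := (Fin n × Fin m) ⊕ (Fin n × Fin m)

/-- `g̃_A = g_A ⊕ g_A`. -/
def gAt (n m : ℕ) : Equiv.Perm (DIdx n m) := Equiv.sumCongr (gA n m) (gA n m)

/-- `g̃_B = g_B ⊕ g_B`. -/
def gBt (n m : ℕ) : Equiv.Perm (DIdx n m) := Equiv.sumCongr (gB n m) (gB n m)

/-- `X̃ = X ⊕ X`. -/
def Xt (n m : ℕ) (hm : m % 2 = 0) : Equiv.Perm (DIdx n m) :=
  Equiv.sumCongr (Xel n m hm) (Xel n m hm)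

/-- The set of blocks of `P(X̃)`; it has `4n` elements. -/
abbrev BXt (n m : ℕ) (hm : m % 2 = 0) := Quotient (orbitSetoid (Xt n m hm))

/-- `q̃_A = q_{X̃}(g̃_A) ∈ P_{4n}`. -/
def qAt (n m : ℕ) (hm : m % 2 = 0) : Setoid (BXt n m hm) :=
  qc (Xt n m hm) (gAt n m)

/-- `q̃_B = q_{X̃}(g̃_B) ∈ P_{4n}`. -/
def qBt (n m : ℕ) (hm : m % 2 = 0) : Setoid (BXt n m hm) :=
  qc (Xt n m hm) (gBt n m)

/-- A block of `P(X̃)` lies in the first copy. -/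
def inCopy1 {n m : ℕ} {hm : m % 2 = 0} (u : BXt n m hm) : Prop :=
  ∃ x, Quotient.mk (orbitSetoid (Xt n m hm)) (Sum.inl x) = u

/-- `#₁⁽¹⁾(q)`: the number of singlets of `q` among the first-copy positions. -/
def nS1 {n m : ℕ} {hm : m % 2 = 0} (q : Setoid (BXt n m hm)) : ℤ :=
  Nat.card {u : BXt n m hm // IsSinglet q u ∧ inCopy1 u}

/-- `#₁⁽²⁾(q)`: the number of singlets of `q` among the second-copy positions. -/
def nS2 {n m : ℕ} {hm : m % 2 = 0} (q : Setoid (BXt n m hm)) : ℤ :=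
  Nat.card {u : BXt n m hm // IsSinglet q u ∧ ¬ inCopy1 u}

/-- `τ ∈ P_{4n}`, the two-block partition separating the two copies. -/
def tau (n m : ℕ) (hm : m % 2 = 0) : Setoid (BXt n m hm) where
  r u v := inCopy1 u ↔ inCopy1 v
  iseqv := ⟨fun _ => Iff.rfl, Iff.symm, Iff.trans⟩

/-! ## Graphs, cuts and optimization programs -/

variable {V : Type*}

/-- Sum of an edge function along (the edge list of) a walk, with multiplicity. -/
def wkSum {β : Type*} [AddCommMonoid β] {G : SimpleGraph V} {x y : V}
    (f : Sym2 V → β) (L : G.Walk x y) : β :=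
  (L.edges.map f).sum

variable [Fintype V]

/-- Sum of an edge weight function over a set of edges. -/
def wsum (f : Sym2 V → ℝ) (S : Set (Sym2 V)) : ℝ :=
  ∑ e ∈ Finset.univ.filter (· ∈ S), f e

/-- The cut surface `μ(r)`: edges of `G` with one endpoint in `r`, the other outside. -/
def mu (G : SimpleGraph V) (r : Set V) : Set (Sym2 V) :=
  {e | e ∈ G.edgeSet ∧ ∃ x y, e = s(x, y) ∧ x ∈ r ∧ y ∉ r}

/-- `μ(r₁:r₂)`: edges of `G` with an endpoint in `r₁` and an endpoint in `r₂`. -/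
def mu2 (G : SimpleGraph V) (r₁ r₂ : Set V) : Set (Sym2 V) :=
  {e | e ∈ G.edgeSet ∧ ∃ x y, e = s(x, y) ∧ x ∈ r₁ ∧ y ∈ r₂}

/-- `r` is a cut for `X : Y`. -/
def IsCut (X Y r : Set V) : Prop := X ⊆ r ∧ Y ⊆ rᶜ

/-- The minimal cut area `𝒜(X:Y)`. -/
def minCut (G : SimpleGraph V) (w : Sym2 V → ℝ) (X Y : Set V) : ℝ :=
  sInf {a | ∃ r : Set V, IsCut X Y r ∧ a = wsum w (mu G r)}

/-- `(α,β,γ)` is a triway cut for `(A,B,C)`. -/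
def IsTriway (A B C α β γ : Set V) : Prop :=
  α ∪ β ∪ γ = Set.univ ∧ Disjoint α β ∧ Disjoint β γ ∧ Disjoint α γ ∧
    A ⊆ α ∧ B ⊆ β ∧ C ⊆ γ

/-- The area of a triway cut with tensions `(t_{A:B}, t_{B:C}, t_{C:A})`. -/
def triArea (G : SimpleGraph V) (w : Sym2 V → ℝ) (tAB tBC tCA : ℝ)
    (α β γ : Set V) : ℝ :=
  tAB * wsum w (mu2 G α β) + tBC * wsum w (mu2 G β γ) + tCA * wsum w (mu2 G γ α)

/-- The minimal triway cut area `𝒜_t(A:B:C)`. -/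
def triCut (G : SimpleGraph V) (w : Sym2 V → ℝ) (tAB tBC tCA : ℝ)
    (A B C : Set V) : ℝ :=
  sInf {a | ∃ α β γ : Set V, IsTriway A B C α β γ ∧ a = triArea G w tAB tBC tCA α β γ}

/-- Boundary data: `∂ = A ⊔ B ⊔ C` (pairwise disjoint). -/
def Bdy (A B C : Set V) : Prop := Disjoint A B ∧ Disjoint A C ∧ Disjoint B C

/-! ### The permutation optimization `R` -/

/-- The symmetric edge function induced by the Cayley distance of a vertex
configuration of permutations. -/
def permE {ι : Type*} [Fintype ι] (g : V → Equiv.Perm ι) : Sym2 V → ℝ :=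
  Sym2.lift ⟨fun x y => (cayley (g x) (g y) : ℝ),
    fun x y => congrArg Int.cast (cayley_comm (g x) (g y))⟩

/-- The free energy `R(g) = Σ_e w(e) d(g(x),g(y))`. -/
def Renergy {ι : Type*} [Fintype ι] (G : SimpleGraph V) (w : Sym2 V → ℝ)
    (g : V → Equiv.Perm ι) : ℝ :=
  wsum (fun e => w e * permE g e) G.edgeSet

/-- The optimal value `R` of the permutation optimization. -/
def Rval {ι : Type*} [Fintype ι] (G : SimpleGraph V) (w : Sym2 V → ℝ)
    (A B C : Set V) (g₁ g₂ : Equiv.Perm ι) : ℝ :=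
  sInf {a | ∃ g : V → Equiv.Perm ι,
    (∀ v ∈ A, g v = g₁) ∧ (∀ v ∈ B, g v = g₂) ∧ (∀ v ∈ C, g v = 1) ∧
    a = Renergy G w g}

/-! ### The set-partition optimization `Q` -/

/-- The symmetric integer edge function induced by the partition distance of a vertex
configuration of partitions. -/
def partEZ {κ : Type*} (q : V → Setoid κ) : Sym2 V → ℤ :=
  Sym2.lift ⟨fun x y => pdist (q x) (q y), fun x y => pdist_comm (q x) (q y)⟩

/-- The free energy `Q(q) = Σ_e w(e) d(q(x),q(y))`. -/
def Qenergy {κ : Type*} (G : SimpleGraph V) (w : Sym2 V → ℝ)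
    (q : V → Setoid κ) : ℝ :=
  wsum (fun e => w e * (partEZ q e : ℝ)) G.edgeSet

/-- The optimal value `Q` of the set-partition optimization. -/
def Qval {κ : Type*} (G : SimpleGraph V) (w : Sym2 V → ℝ)
    (A B C : Set V) (q₁ q₂ : Setoid κ) : ℝ :=
  sInf {a | ∃ q : V → Setoid κ,
    (∀ v ∈ A, q v = q₁) ∧ (∀ v ∈ B, q v = q₂) ∧ (∀ v ∈ C, q v = ⊥) ∧
    a = Qenergy G w q}

/-! ### The Boolean optimization `B` -/

/-- The Hamming distance between two bit strings. -/
def ham {κ : Type*} [Fintype κ] (b₁ b₂ : κ → Bool) : ℤ :=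
  ∑ k : κ, if b₁ k = b₂ k then 0 else 1

/-- The bit string `b(q)` of a partition: `false` exactly at singlets. -/
def bvec {κ : Type*} (p : Setoid κ) : κ → Bool :=
  fun u => if IsSinglet p u then false else true

/-- Feasibility of `r` for the Boolean program at configuration `b`. -/
def Bfeas {κ : Type*} [Fintype κ] (G : SimpleGraph V) (A B : Set V) (n : ℕ)
    (b : V → κ → Bool) (r : Sym2 V → ℕ) : Prop :=
  (∀ x ∈ A, ∀ y ∈ B, ∀ L : G.Walk x y,
    2 ∣ wkSum (fun e => (r e : ℤ)) L ∧
    wkSum (fun e => (r e : ℤ)) L ≥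
      2 * ((n : ℤ) - if ∀ v ∈ L.support, ∀ k, b v k = true then 1 else 0)) ∧
  (∀ x y : V, G.Adj x y → (r s(x, y) : ℤ) ≥ ⌈(ham (b x) (b y) : ℚ) / 2⌉)

/-- The inner Boolean optimum `B(b)` at a fixed Boolean configuration `b`. -/
def BvalAt {κ : Type*} [Fintype κ] (G : SimpleGraph V) (w : Sym2 V → ℝ)
    (A B : Set V) (n : ℕ) (b : V → κ → Bool) : ℝ :=
  sInf {a | ∃ r : Sym2 V → ℕ, Bfeas G A B n b r ∧
    a = wsum (fun e => w e * (r e : ℝ)) G.edgeSet}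

/-- The optimal value `B` of the Boolean optimization. -/
def Bval (κ : Type*) [Fintype κ] (G : SimpleGraph V) (w : Sym2 V → ℝ)
    (A B C : Set V) (n : ℕ) : ℝ :=
  sInf {a | ∃ b : V → κ → Bool,
    (∀ v ∈ A ∪ B, ∀ k, b v k = true) ∧ (∀ v ∈ C, ∀ k, b v k = false) ∧
    ∃ r : Sym2 V → ℕ, Bfeas G A B n b r ∧
      a = wsum (fun e => w e * (r e : ℝ)) G.edgeSet}

/-! ### The integer program `I` -/

/-- Feasibility of `(ρ,σ)` for the integer program. -/
def IPfeas (G : SimpleGraph V) (A B C : Set V) (n : ℕ) (ρ σ : Sym2 V → ℕ) : Prop :=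
  (∀ x ∈ A, ∀ y ∈ B, ∀ L : G.Walk x y,
    2 ∣ wkSum (fun e => (σ e : ℤ) + (ρ e : ℤ)) L ∧
    wkSum (fun e => (σ e : ℤ) + (ρ e : ℤ)) L ≥
      2 * ((n : ℤ) - if wkSum (fun e => (ρ e : ℤ)) L = 0 then 1 else 0)) ∧
  (∀ x ∈ A ∪ B, ∀ y ∈ C, ∀ L : G.Walk x y,
    wkSum (fun e => (ρ e : ℤ)) L ≥ (n : ℤ))

/-- The objective of the integer program. -/
def IPobj (G : SimpleGraph V) (w : Sym2 V → ℝ) (ρ σ : Sym2 V → ℕ) : ℝ :=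
  wsum (fun e => w e * ((σ e : ℝ) + (ρ e : ℝ))) G.edgeSet

/-- The optimal value `I` of the integer program. -/
def Ival (G : SimpleGraph V) (w : Sym2 V → ℝ) (A B C : Set V) (n : ℕ) : ℝ :=
  sInf {a | ∃ ρ σ : Sym2 V → ℕ, IPfeas G A B C n ρ σ ∧ a = IPobj G w ρ σ}

/-! ### The ℓ-intersecting cut problem `M` -/

/-- Feasibility for the `ℓ`-intersecting cut problem with boundary sets
`Γ₀, …, Γ_ℓ` and `C`, for a half-integer valued `ϱ`. -/
def Mfeas (G : SimpleGraph V) (Γ : ℕ → Set V) (ℓ : ℕ) (C : Set V)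
    (ϱ : Sym2 V → ℚ) : Prop :=
  (∀ e, ∃ j : ℕ, ϱ e = (j : ℚ) / 2) ∧
  (∀ k k' : ℕ, k ≤ ℓ → k' ≤ ℓ → ∀ x ∈ Γ k, ∀ y ∈ Γ k', ∀ L : G.Walk x y,
    ∃ j : ℕ, wkSum ϱ L = |(k : ℚ) - (k' : ℚ)| + (j : ℚ)) ∧
  (∀ k : ℕ, k ≤ ℓ → ∀ x ∈ Γ k, ∀ y ∈ C, ∀ L : G.Walk x y,
    ∃ j : ℕ, wkSum ϱ L = (ℓ : ℚ) / 2 + (j : ℚ))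

/-- The objective of the `ℓ`-intersecting cut problem. -/
def Mobj (G : SimpleGraph V) (w : Sym2 V → ℝ) (ϱ : Sym2 V → ℚ) : ℝ :=
  wsum (fun e => w e * (ϱ e : ℝ)) G.edgeSet

/-- The optimal value `M` of the `ℓ`-intersecting cut problem. -/
def Mval (G : SimpleGraph V) (w : Sym2 V → ℝ) (Γ : ℕ → Set V) (ℓ : ℕ)
    (C : Set V) : ℝ :=
  sInf {a | ∃ ϱ : Sym2 V → ℚ, Mfeas G Γ ℓ C ϱ ∧ a = Mobj G w ϱ}

/-- The complementary reduced graph `G^c`: the edges of `G` not lying entirely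
inside `V'`. -/
def reducedGraph (G : SimpleGraph V) (V' : Set V) : SimpleGraph V where
  Adj x y := G.Adj x y ∧ ¬ (x ∈ V' ∧ y ∈ V')
  symm := by
    constructor
    intro x y h
    exact ⟨h.1.symm, fun hc => h.2 ⟨hc.2, hc.1⟩⟩
  loopless := by
    constructor
    intro x h
    exact G.loopless.irrefl x h.1

end RTN

namespace RTNAux
open RTN (nb)


variable {α : Type*}


/-- Pair atom: block {i,j}, rest singletons. -/
def pairS (i j : α) : Setoid α where
  r x y := x = y ∨ (x = i ∧ y = j) ∨ (x = j ∧ y = i)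
  iseqv := by
    refine ⟨fun x => Or.inl rfl, ?_, ?_⟩
    · intro x y h; tauto
    · intro x y z h1 h2
      rcases h1 with rfl | ⟨h1a, h1b⟩ | ⟨h1a, h1b⟩ <;>
        rcases h2 with rfl | ⟨h2a, h2b⟩ | ⟨h2a, h2b⟩ <;> subst_vars <;> tauto

lemma pairS_rel (i j : α) : (pairS i j).r i j :=
  show i = j ∨ (i = i ∧ j = j) ∨ (i = j ∧ j = i) from Or.inr (Or.inl ⟨rfl, rfl⟩)

lemma pairS_le {q : Setoid α} {i j : α} (h : q.r i j) : pairS i j ≤ q := by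
  intro x y hxy
  have hxy' : x = y ∨ (x = i ∧ y = j) ∨ (x = j ∧ y = i) := hxy
  rcases hxy' with rfl | ⟨rfl, rfl⟩ | ⟨rfl, rfl⟩
  · exact q.iseqv.refl x
  · exact h
  · exact q.iseqv.symm h

lemma nb_le_of_le [Finite α] {p t : Setoid α} (h : p ≤ t) : nb t ≤ nb p := by
  unfold RTN.nb
  have hs : Function.Surjective
      (Quotient.lift (fun a => Quotient.mk t a)
        (fun a b hab => Quotient.sound (h hab)) : Quotient p → Quotient t) := by
    intro u; obtain ⟨a, rfl⟩ := Quotient.exists_rep u; exact ⟨Quotient.mk p a, rfl⟩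
  exact_mod_cast Nat.card_le_card_of_surjective _ hs


/-- The setoid obtained from `q` by merging the (distinct) classes of `i` and `j`. -/
def mergeS (q : Setoid α) (i j : α) (h : ¬ q.r i j) : Setoid α where
  r x y := q.r x y ∨ (q.r x i ∧ q.r j y) ∨ (q.r x j ∧ q.r i y)
  iseqv := by
    refine ⟨fun x => Or.inl (q.iseqv.refl x), ?_, ?_⟩
    · rintro x y (hxy | ⟨h1, h2⟩ | ⟨h1, h2⟩)
      · exact Or.inl (q.iseqv.symm hxy)
      · exact Or.inr (Or.inr ⟨q.iseqv.symm h2, q.iseqv.symm h1⟩)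
      · exact Or.inr (Or.inl ⟨q.iseqv.symm h2, q.iseqv.symm h1⟩)
    · rintro x y z (hxy | ⟨h1, h2⟩ | ⟨h1, h2⟩) (hyz | ⟨g1, g2⟩ | ⟨g1, g2⟩)
      · exact Or.inl (q.iseqv.trans hxy hyz)
      · exact Or.inr (Or.inl ⟨q.iseqv.trans hxy g1, g2⟩)
      · exact Or.inr (Or.inr ⟨q.iseqv.trans hxy g1, g2⟩)
      · exact Or.inr (Or.inl ⟨h1, q.iseqv.trans h2 hyz⟩)
      · exact absurd (q.iseqv.symm (q.iseqv.trans h2 g1)) h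
      · exact Or.inl (q.iseqv.trans h1 g2)
      · exact Or.inr (Or.inr ⟨h1, q.iseqv.trans h2 hyz⟩)
      · exact Or.inl (q.iseqv.trans h1 g2)
      · exact absurd (q.iseqv.trans h2 g1) h

lemma sup_pair_eq {q : Setoid α} {i j : α} (h : ¬ q.r i j) :
    q ⊔ pairS i j = mergeS q i j h := by
  apply le_antisymm
  · apply sup_le
    · intro x y hxy
      exact Or.inl hxy
    · intro x y hxy
      have hxy' : x = y ∨ (x = i ∧ y = j) ∨ (x = j ∧ y = i) := hxy
      rcases hxy' with rfl | ⟨rfl, rfl⟩ | ⟨rfl, rfl⟩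
      · exact Or.inl (q.iseqv.refl x)
      · exact Or.inr (Or.inl ⟨q.iseqv.refl x, q.iseqv.refl y⟩)
      · exact Or.inr (Or.inr ⟨q.iseqv.refl x, q.iseqv.refl y⟩)
  · intro x y hxy
    have hq : q ≤ q ⊔ pairS i j := le_sup_left
    have hp : pairS i j ≤ q ⊔ pairS i j := le_sup_right
    have hxy' : q.r x y ∨ (q.r x i ∧ q.r j y) ∨ (q.r x j ∧ q.r i y) := hxy
    rcases hxy' with hxy | ⟨h1, h2⟩ | ⟨h1, h2⟩
    · exact hq hxy
    · exact (q ⊔ pairS i j).iseqv.trans (hq h1)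
        ((q ⊔ pairS i j).iseqv.trans (hp (pairS_rel i j)) (hq h2))
    · exact (q ⊔ pairS i j).iseqv.trans (hq h1)
        ((q ⊔ pairS i j).iseqv.trans
          ((q ⊔ pairS i j).iseqv.symm (hp (pairS_rel i j))) (hq h2))

lemma card_quot_sup_pair [Finite α] {q : Setoid α} {i j : α} (h : ¬ q.r i j) :
    Nat.card (Quotient (q ⊔ pairS i j)) + 1 = Nat.card (Quotient q) := by
  have hne : (Quotient.mk q i : Quotient q) ≠ Quotient.mk q j := by
    intro hc
    exact h (Quotient.exact hc)
  set e := q ⊔ pairS i j with he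
  have hle : q ≤ e := le_sup_left
  have hrel : ∀ x y : α, e.r x y ↔
      (q.r x y ∨ (q.r x i ∧ q.r j y) ∨ (q.r x j ∧ q.r i y)) := by
    intro x y
    rw [he, sup_pair_eq h]
    exact Iff.rfl
  let g : Quotient q → Quotient e :=
    Quotient.lift (fun a => Quotient.mk e a) (fun a b hab => Quotient.sound (hle hab))
  let f : {x : Quotient q // x ≠ Quotient.mk q j} → Quotient e := fun x => g x.val
  have hbij : Function.Bijective f := by
    constructor
    · rintro ⟨x, hx⟩ ⟨y, hy⟩ hxy
      obtain ⟨a, rfl⟩ := Quotient.exists_rep x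
      obtain ⟨b, rfl⟩ := Quotient.exists_rep y
      have hab : e.r a b := Quotient.exact hxy
      rcases (hrel a b).1 hab with hq' | ⟨h1, h2⟩ | ⟨h1, h2⟩
      · exact Subtype.ext (Quotient.sound hq')
      · exact absurd (Quotient.sound (q.iseqv.symm h2)) hy
      · exact absurd (Quotient.sound h1) hx
    · intro u
      obtain ⟨b, rfl⟩ := Quotient.exists_rep u
      by_cases hb : q.r b j
      · refine ⟨⟨Quotient.mk q i, hne⟩, ?_⟩
        apply Quotient.sound
        exact (hrel i b).2 (Or.inr (Or.inl ⟨q.iseqv.refl i, q.iseqv.symm hb⟩))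
      · refine ⟨⟨Quotient.mk q b, fun hc => hb (Quotient.exact hc)⟩, rfl⟩
  have hcard := Nat.card_eq_of_bijective f hbij
  have hsub : Nat.card {x : Quotient q // x ≠ Quotient.mk q j} + 1
      = Nat.card (Quotient q) := by
    rw [Nat.card_eq_fintype_card, Nat.card_eq_fintype_card]
    have h1 : Fintype.card {x : Quotient q // x ≠ Quotient.mk q j}
        = Fintype.card (Quotient q) - 1 := by
      simp [Fintype.card_subtype_compl]
    have h2 : 1 ≤ Fintype.card (Quotient q) :=
      Fintype.card_pos_iff.mpr ⟨Quotient.mk q j⟩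
    omega
  omega

lemma nb_sup_pair [Finite α] {q : Setoid α} {i j : α} (h : ¬ q.r i j) :
    nb (q ⊔ pairS i j) = nb q - 1 := by
  have := card_quot_sup_pair h
  unfold RTN.nb
  omega

lemma step_mono [Finite α] {q q' : Setoid α} (h : q ≤ q') (i j : α) :
    nb q' - nb (q' ⊔ pairS i j) ≤ nb q - nb (q ⊔ pairS i j) := by
  by_cases hq : q.r i j
  · have hq' : q'.r i j := h hq
    rw [sup_eq_left.mpr (pairS_le hq), sup_eq_left.mpr (pairS_le hq')]
    omega
  · rw [nb_sup_pair hq]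
    by_cases hq' : q'.r i j
    · rw [sup_eq_left.mpr (pairS_le hq')]
      omega
    · rw [nb_sup_pair hq']
      omega

/-- Fold of pair atoms. -/
def foldPair : List (α × α) → Setoid α
  | [] => ⊥
  | p :: l => pairS p.1 p.2 ⊔ foldPair l

lemma main_list [Finite α] (l : List (α × α)) :
    ∀ q q' : Setoid α, q ≤ q' →
      nb q' - nb (q' ⊔ foldPair l) ≤ nb q - nb (q ⊔ foldPair l) := by
  induction l with
  | nil =>
    intro q q' _
    simp [foldPair]
  | cons p l ih =>
    intro q q' hqq'
    have h1 : q ⊔ foldPair (p :: l) = (q ⊔ pairS p.1 p.2) ⊔ foldPair l := by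
      rw [foldPair, ← sup_assoc]
    have h2 : q' ⊔ foldPair (p :: l) = (q' ⊔ pairS p.1 p.2) ⊔ foldPair l := by
      rw [foldPair, ← sup_assoc]
    rw [h1, h2]
    have hs := step_mono hqq' p.1 p.2
    have hi := ih (q ⊔ pairS p.1 p.2) (q' ⊔ pairS p.1 p.2) (sup_le_sup_right hqq' _)
    omega

lemma foldPair_le {l : List (α × α)} {c : Setoid α}
    (h : ∀ p ∈ l, pairS p.1 p.2 ≤ c) : foldPair l ≤ c := by
  induction l with
  | nil => exact bot_le
  | cons p l ih =>
    rw [foldPair]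
    exact sup_le (h p List.mem_cons_self) (ih fun a ha => h a (List.mem_cons_of_mem p ha))

lemma le_foldPair {l : List (α × α)} {p : α × α} (h : p ∈ l) :
    pairS p.1 p.2 ≤ foldPair l := by
  induction l with
  | nil => exact absurd h List.not_mem_nil
  | cons a l ih =>
    rw [foldPair]
    rcases List.mem_cons.1 h with rfl | h'
    · exact le_sup_left
    · exact le_trans (ih h') le_sup_right

lemma exists_foldPair [Fintype α] (b : Setoid α) : ∃ l : List (α × α), foldPair l = b := by
  refine ⟨((Finset.univ ×ˢ Finset.univ : Finset (α × α)).filter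
    (fun p => b.r p.1 p.2)).toList, ?_⟩
  apply le_antisymm
  · apply foldPair_le
    intro p hp
    rw [Finset.mem_toList, Finset.mem_filter] at hp
    exact pairS_le hp.2
  · intro x y hxy
    have hmem : (x, y) ∈ ((Finset.univ ×ˢ Finset.univ : Finset (α × α)).filter
        (fun p => b.r p.1 p.2)).toList := by
      rw [Finset.mem_toList, Finset.mem_filter]
      exact ⟨Finset.mem_product.2 ⟨Finset.mem_univ x, Finset.mem_univ y⟩, hxy⟩
    exact le_foldPair hmem (pairS_rel x y)

/-- Key lemma: joining with `b` decreases the block count by less for coarser partitions. -/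
lemma nb_sub_sup_mono [Fintype α] (b : Setoid α) {q q' : Setoid α} (h : q ≤ q') :
    nb q' - nb (q' ⊔ b) ≤ nb q - nb (q ⊔ b) := by
  obtain ⟨l, rfl⟩ := exists_foldPair b
  exact main_list l q q' h

lemma eq_of_le_of_nb_le [Fintype α] {q t : Setoid α} (h : q ≤ t) (hn : nb q ≤ nb t) :
    q = t := by
  by_contra hne
  have hex : ∃ i j : α, t.r i j ∧ ¬ q.r i j := by
    by_contra hc
    push_neg at hc
    exact hne (le_antisymm h fun x y hxy => hc x y hxy)
  obtain ⟨i, j, hij, hnij⟩ := hex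
  have h1 : q ⊔ pairS i j ≤ t := sup_le h (pairS_le hij)
  have h2 := nb_le_of_le h1
  rw [nb_sup_pair hnij] at h2
  omega

end RTNAux

/-- The partition distance `d(p,q) = #(p)+#(q)-2#(p⊔q)` is a metric on the
lattice of set partitions of `{1,…,N}`; moreover (a) `d(p,p') ≥ |#(p)-#(p')|` and
(b) `d(p₁,p₂) ≥ d(p₁⊔r, p₂⊔r)`. -/
theorem partition_distance_metric {N : ℕ} (p p' p'' : Setoid (Fin N)) :
    (0 ≤ RTN.pdist p p' ∧ (RTN.pdist p p' = 0 ↔ p = p')) ∧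
    RTN.pdist p p' = RTN.pdist p' p ∧
    RTN.pdist p p' + RTN.pdist p' p'' ≥ RTN.pdist p p'' ∧
    RTN.pdist p p' ≥ |RTN.nb p - RTN.nb p'| ∧
    (∀ r : Setoid (Fin N), RTN.pdist p p' ≥ RTN.pdist (p ⊔ r) (p' ⊔ r)) := by
  have hmono : ∀ {x y : Setoid (Fin N)}, x ≤ y → RTN.nb y ≤ RTN.nb x :=
    fun h => RTNAux.nb_le_of_le h
  have key : ∀ (b x y : Setoid (Fin N)), x ≤ y →
      RTN.nb y - RTN.nb (y ⊔ b) ≤ RTN.nb x - RTN.nb (x ⊔ b) :=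
    fun b x y h => RTNAux.nb_sub_sup_mono b h
  have h1 : RTN.nb (p ⊔ p') ≤ RTN.nb p := hmono le_sup_left
  have h2 : RTN.nb (p ⊔ p') ≤ RTN.nb p' := hmono le_sup_right
  refine ⟨⟨?_, ?_, ?_⟩, RTN.pdist_comm p p', ?_, ?_, ?_⟩
  · unfold RTN.pdist
    linarith
  · intro h0
    unfold RTN.pdist at h0
    have e1 : p = p ⊔ p' :=
      RTNAux.eq_of_le_of_nb_le le_sup_left (by linarith)
    have e2 : p' = p ⊔ p' :=
      RTNAux.eq_of_le_of_nb_le le_sup_right (by linarith)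
    exact e1.trans e2.symm
  · rintro rfl
    unfold RTN.pdist
    rw [sup_idem]
    ring
  · have k1 := key p p' (p' ⊔ p'') le_sup_left
    have k2 : RTN.nb ((p' ⊔ p'') ⊔ p) ≤ RTN.nb (p ⊔ p'') :=
      hmono (sup_le le_sup_right (le_trans le_sup_right le_sup_left))
    rw [sup_comm p' p] at k1
    unfold RTN.pdist
    linarith
  · rw [ge_iff_le, abs_le]
    unfold RTN.pdist
    constructor <;> linarith
  · intro r
    have k1 := key r p (p ⊔ p') le_sup_left
    have k2 := key r p' (p ⊔ p') le_sup_right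
    have hsup : (p ⊔ r) ⊔ (p' ⊔ r) = (p ⊔ p') ⊔ r := by
      rw [sup_sup_sup_comm, sup_idem]
    unfold RTN.pdist
    rw [hsup]
    linarith
end
end

section
/- For all set partitions q₁,q₂∈P_N one has d(q₁,q₂)≥⌈d₁(s(q₁),s(q₂))/2⌉, where d is the partition distance, s(·) is the singlet pattern, and d₁ is the singlet distance. -/
open scoped Classical

noncomputable section

section AuxStatement2
open RTN

variable {α : Type*}

lemma aux_singlet_mono {s t : Setoid α} (h : s ≤ t) {x : α} (hx : IsSinglet t x) :
    IsSinglet s x := fun y hy => hx y (Setoid.le_def.mp h hy)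

lemma aux_singlet_sup {s t : Setoid α} {x : α} (hs : IsSinglet s x) (ht : IsSinglet t x) :
    IsSinglet (s ⊔ t) x := by
  intro y hy
  rw [Setoid.sup_eq_eqvGen] at hy
  have h' : Relation.EqvGen (fun a b => s.r a b ∨ t.r a b) x y := hy
  have key : ∀ a b : α, Relation.EqvGen (fun a b => s.r a b ∨ t.r a b) a b → (a = x ↔ b = x) := by
    intro a b h
    induction h with
    | rel a b hab =>
      constructor
      · rintro rfl
        rcases hab with h | h
        · exact hs b h
        · exact ht b h
      · rintro rfl
        rcases hab with h | h
        · exact hs a (s.symm h)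
        · exact ht a (t.symm h)
    | refl a => exact Iff.rfl
    | symm a b _ ih => exact ih.symm
    | trans a b c _ _ ih1 ih2 => exact ih1.trans ih2
  exact (key x y h').mp rfl

lemma aux_isSinglet_spat (p : Setoid α) (x : α) :
    IsSinglet (spat p) x ↔ IsSinglet p x := by
  constructor
  · intro h
    by_contra hx
    obtain ⟨y, hxy, hy⟩ : ∃ y, p.r x y ∧ y ≠ x := by
      by_contra hc
      push_neg at hc
      exact hx fun y hxy => hc y hxy
    have hynot : ¬ IsSinglet p y := fun hs => hy ((hs x (p.symm hxy)).symm)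
    exact hy (h y (Or.inr ⟨hx, hynot⟩))
  · intro hx y hy
    rcases hy with h | ⟨h1, _⟩
    · exact h.symm
    · exact absurd hx h1

lemma aux_collapse [Finite α] {q r : Setoid α} (f : Quotient q → Quotient r)
    (hf : ∀ x, f (Quotient.mk q x) = Quotient.mk r x) {c : Quotient r}
    (h1 : Nat.card {b : Quotient q // f b = c} ≤ 1) {x : α} (hx : IsSinglet q x)
    (hxc : Quotient.mk r x = c) {y : α} (hyc : Quotient.mk r y = c) : y = x := by
  have hsub : Subsingleton {b : Quotient q // f b = c} :=
    Finite.card_le_one_iff_subsingleton.mp h1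
  have he : (⟨Quotient.mk q x, by rw [hf]; exact hxc⟩ : {b : Quotient q // f b = c})
      = ⟨Quotient.mk q y, by rw [hf]; exact hyc⟩ := Subsingleton.elim _ _
  have h' : q.r x y := Quotient.exact (congrArg Subtype.val he)
  exact hx y h'

lemma aux_t_le_n [Finite α] {q r : Setoid α} (f : Quotient q → Quotient r)
    (hf : ∀ x, f (Quotient.mk q x) = Quotient.mk r x) (c : Quotient r) :
    Nat.card {x : α // IsSinglet q x ∧ Quotient.mk r x = c}
      ≤ Nat.card {b : Quotient q // f b = c} := by
  apply Nat.card_le_card_of_injective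
    (fun x : {x : α // IsSinglet q x ∧ Quotient.mk r x = c} =>
      (⟨Quotient.mk q x.1, by rw [hf]; exact x.2.2⟩ : {b : Quotient q // f b = c}))
  intro x y hxy
  have h' : q.r x.1 y.1 := Quotient.exact (congrArg Subtype.val hxy)
  exact Subtype.ext ((x.2.1 y.1 h').symm)

lemma aux_n_pos [Finite α] {q r : Setoid α} (f : Quotient q → Quotient r)
    (hf : ∀ x, f (Quotient.mk q x) = Quotient.mk r x) (c : Quotient r) :
    1 ≤ Nat.card {b : Quotient q // f b = c} := by
  obtain ⟨x, rfl⟩ := Quotient.exists_rep c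
  have : Nonempty {b : Quotient q // f b = Quotient.mk r x} :=
    ⟨⟨Quotient.mk q x, hf x⟩⟩
  exact Nat.card_pos

/-- The per-block inequality. -/
lemma aux_block [Finite α] {qa qb r : Setoid α}
    (hra : qa ≤ r) (hrb : qb ≤ r) (hrs : r ≤ qa ⊔ qb)
    (fa : Quotient qa → Quotient r) (fb : Quotient qb → Quotient r)
    (hfa : ∀ x, fa (Quotient.mk qa x) = Quotient.mk r x)
    (hfb : ∀ x, fb (Quotient.mk qb x) = Quotient.mk r x) (c : Quotient r) :
    Nat.card {x : α // IsSinglet qa x ∧ Quotient.mk r x = c}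
      + Nat.card {x : α // IsSinglet qb x ∧ Quotient.mk r x = c} + 4
    ≤ 2 * Nat.card {b : Quotient qa // fa b = c}
      + 2 * Nat.card {b : Quotient qb // fb b = c}
      + 2 * Nat.card {x : α // (IsSinglet qa x ∧ IsSinglet qb x) ∧ Quotient.mk r x = c} := by
  have hna := aux_n_pos fa hfa c
  have hnb := aux_n_pos fb hfb c
  have hta := aux_t_le_n fa hfa c
  have htb := aux_t_le_n fb hfb c
  by_cases hcom : ∃ x : α, (IsSinglet qa x ∧ IsSinglet qb x) ∧ Quotient.mk r x = c
  · obtain ⟨x, ⟨hxa, hxb⟩, hxc⟩ := hcom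
    have hxr : IsSinglet r x := aux_singlet_mono hrs (aux_singlet_sup hxa hxb)
    have hall : ∀ y : α, Quotient.mk r y = c → y = x := by
      intro y hyc
      exact hxr y (Quotient.exact (hxc.trans hyc.symm))
    have hsa : Nat.card {x : α // IsSinglet qa x ∧ Quotient.mk r x = c} ≤ 1 := by
      rw [Finite.card_le_one_iff_subsingleton]
      refine ⟨fun u v => Subtype.ext ?_⟩
      rw [hall u.1 u.2.2, hall v.1 v.2.2]
    have hsb : Nat.card {x : α // IsSinglet qb x ∧ Quotient.mk r x = c} ≤ 1 := by
      rw [Finite.card_le_one_iff_subsingleton]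
      refine ⟨fun u v => Subtype.ext ?_⟩
      rw [hall u.1 u.2.2, hall v.1 v.2.2]
    have h12 : 1 ≤ Nat.card {x : α // (IsSinglet qa x ∧ IsSinglet qb x) ∧ Quotient.mk r x = c} := by
      have : Nonempty {x : α // (IsSinglet qa x ∧ IsSinglet qb x) ∧ Quotient.mk r x = c} :=
        ⟨⟨x, ⟨hxa, hxb⟩, hxc⟩⟩
      exact Nat.card_pos
    omega
  · have hza : Nat.card {b : Quotient qa // fa b = c} ≤ 1 →
        Nat.card {x : α // IsSinglet qa x ∧ Quotient.mk r x = c} = 0 := by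
      intro h1
      have : IsEmpty {x : α // IsSinglet qa x ∧ Quotient.mk r x = c} := by
        refine ⟨fun u => hcom ⟨u.1, ⟨u.2.1, ?_⟩, u.2.2⟩⟩
        intro y hy
        have hyc : Quotient.mk r y = c := by
          rw [← u.2.2]
          exact (Quotient.sound (Setoid.le_def.mp hrb hy)).symm
        exact aux_collapse fa hfa h1 u.2.1 u.2.2 hyc
      exact Nat.card_of_isEmpty
    have hzb : Nat.card {b : Quotient qb // fb b = c} ≤ 1 →
        Nat.card {x : α // IsSinglet qb x ∧ Quotient.mk r x = c} = 0 := by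
      intro h1
      have : IsEmpty {x : α // IsSinglet qb x ∧ Quotient.mk r x = c} := by
        refine ⟨fun u => hcom ⟨u.1, ⟨?_, u.2.1⟩, u.2.2⟩⟩
        intro y hy
        have hyc : Quotient.mk r y = c := by
          rw [← u.2.2]
          exact (Quotient.sound (Setoid.le_def.mp hra hy)).symm
        exact aux_collapse fb hfb h1 u.2.1 u.2.2 hyc
      exact Nat.card_of_isEmpty
    omega

lemma aux_card_fiber {β γ : Type*} [Finite β] [Fintype γ] (f : β → γ) :
    Nat.card β = ∑ c : γ, Nat.card {b // f b = c} := by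
  cases nonempty_fintype β
  have := Fintype.card_congr (Equiv.sigmaFiberEquiv f).symm
  rw [Fintype.card_sigma] at this
  simpa [Nat.card_eq_fintype_card] using this

lemma aux_card_fiber_pred {β γ : Type*} [Finite β] [Fintype γ] (P : β → Prop) (f : β → γ) :
    Nat.card {x // P x} = ∑ c : γ, Nat.card {x // P x ∧ f x = c} := by
  rw [aux_card_fiber (fun y : {x // P x} => f y.1)]
  refine Finset.sum_congr rfl fun c _ => ?_
  exact Nat.card_congr (Equiv.subtypeSubtypeEquivSubtypeInter P (fun x => f x = c))

end AuxStatement2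

/-- For all set partitions `q₁, q₂ ∈ P_N`:
`d(q₁,q₂) ≥ ⌈d₁(s(q₁),s(q₂))/2⌉`. -/
theorem pdist_ge_ceil_half_singlet_dist {N : ℕ} (q₁ q₂ : Setoid (Fin N)) :
    RTN.pdist q₁ q₂ ≥ ⌈(RTN.sdist (RTN.spat q₁) (RTN.spat q₂) : ℚ) / 2⌉ := by
  classical
  set r : Setoid (Fin N) := q₁ ⊔ q₂ with hrdef
  have hle₁ : q₁ ≤ r := le_sup_left
  have hle₂ : q₂ ≤ r := le_sup_right
  let f₁ : Quotient q₁ → Quotient r :=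
    Quotient.lift (Quotient.mk r) (fun a b h => Quotient.sound (Setoid.le_def.mp hle₁ h))
  let f₂ : Quotient q₂ → Quotient r :=
    Quotient.lift (Quotient.mk r) (fun a b h => Quotient.sound (Setoid.le_def.mp hle₂ h))
  have hf₁ : ∀ x, f₁ (Quotient.mk q₁ x) = Quotient.mk r x := fun _ => rfl
  have hf₂ : ∀ x, f₂ (Quotient.mk q₂ x) = Quotient.mk r x := fun _ => rfl
  have hB1 : Nat.card (Quotient q₁) = ∑ c : Quotient r, Nat.card {b // f₁ b = c} :=
    aux_card_fiber f₁
  have hB2 : Nat.card (Quotient q₂) = ∑ c : Quotient r, Nat.card {b // f₂ b = c} :=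
    aux_card_fiber f₂
  have hS1 : Nat.card {x : Fin N // RTN.IsSinglet q₁ x}
      = ∑ c : Quotient r, Nat.card {x : Fin N // RTN.IsSinglet q₁ x ∧ Quotient.mk r x = c} :=
    aux_card_fiber_pred _ _
  have hS2 : Nat.card {x : Fin N // RTN.IsSinglet q₂ x}
      = ∑ c : Quotient r, Nat.card {x : Fin N // RTN.IsSinglet q₂ x ∧ Quotient.mk r x = c} :=
    aux_card_fiber_pred _ _
  have hS12 : Nat.card {x : Fin N // RTN.IsSinglet q₁ x ∧ RTN.IsSinglet q₂ x}
      = ∑ c : Quotient r, Nat.card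
          {x : Fin N // (RTN.IsSinglet q₁ x ∧ RTN.IsSinglet q₂ x) ∧ Quotient.mk r x = c} :=
    aux_card_fiber_pred _ _
  have hK : Nat.card (Quotient r) = ∑ _c : Quotient r, 1 := by
    simp [Nat.card_eq_fintype_card]
  have hsum : ∑ c : Quotient r,
        (Nat.card {x : Fin N // RTN.IsSinglet q₁ x ∧ Quotient.mk r x = c}
          + Nat.card {x : Fin N // RTN.IsSinglet q₂ x ∧ Quotient.mk r x = c} + 4)
      ≤ ∑ c : Quotient r,
        (2 * Nat.card {b // f₁ b = c} + 2 * Nat.card {b // f₂ b = c}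
          + 2 * Nat.card
            {x : Fin N // (RTN.IsSinglet q₁ x ∧ RTN.IsSinglet q₂ x) ∧ Quotient.mk r x = c}) :=
    Finset.sum_le_sum fun c _ =>
      aux_block hle₁ hle₂ (le_of_eq hrdef) f₁ f₂ hf₁ hf₂ c
  have hmain : Nat.card {x : Fin N // RTN.IsSinglet q₁ x}
        + Nat.card {x : Fin N // RTN.IsSinglet q₂ x} + 4 * Nat.card (Quotient r)
      ≤ 2 * Nat.card (Quotient q₁) + 2 * Nat.card (Quotient q₂)
        + 2 * Nat.card {x : Fin N // RTN.IsSinglet q₁ x ∧ RTN.IsSinglet q₂ x} := by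
    rw [hS1, hS2, hS12, hB1, hB2, hK]
    have h4 : (∑ _c : Quotient r, (4:ℕ)) = 4 * ∑ _c : Quotient r, (1:ℕ) := by
      simp [Finset.sum_const, mul_comm]
    simp only [Finset.sum_add_distrib, ← Finset.mul_sum] at hsum ⊢
    omega
  have e1 : RTN.nS (RTN.spat q₁) = (Nat.card {x : Fin N // RTN.IsSinglet q₁ x} : ℤ) := by
    unfold RTN.nS
    congr 1
    exact Nat.card_congr (Equiv.subtypeEquivRight (aux_isSinglet_spat q₁))
  have e2 : RTN.nS (RTN.spat q₂) = (Nat.card {x : Fin N // RTN.IsSinglet q₂ x} : ℤ) := by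
    unfold RTN.nS
    congr 1
    exact Nat.card_congr (Equiv.subtypeEquivRight (aux_isSinglet_spat q₂))
  have e3 : RTN.nS (RTN.spat q₁ ⊔ RTN.spat q₂)
      = (Nat.card {x : Fin N // RTN.IsSinglet q₁ x ∧ RTN.IsSinglet q₂ x} : ℤ) := by
    unfold RTN.nS
    congr 1
    refine Nat.card_congr (Equiv.subtypeEquivRight fun x => ?_)
    constructor
    · intro h
      exact ⟨(aux_isSinglet_spat q₁ x).mp (aux_singlet_mono le_sup_left h),
             (aux_isSinglet_spat q₂ x).mp (aux_singlet_mono le_sup_right h)⟩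
    · rintro ⟨h1, h2⟩
      exact aux_singlet_sup ((aux_isSinglet_spat q₁ x).mpr h1)
        ((aux_isSinglet_spat q₂ x).mpr h2)
  have hz : RTN.sdist (RTN.spat q₁) (RTN.spat q₂) ≤ RTN.pdist q₁ q₂ * 2 := by
    unfold RTN.sdist RTN.pdist RTN.nb
    rw [e1, e2, e3, ← hrdef]
    omega
  rw [ge_iff_le, Int.ceil_le, div_le_iff₀ (by norm_num : (0:ℚ) < 2)]
  exact_mod_cast hz
end
end

section
/- Let t_A,t_B∈P_N satisfy t_A∧t_B=id (the partition into singletons), and suppose the bipartite graph G whose black vertices are the blocks of t_A, whose white vertices are the blocks of t_B, and which has one edge for each element of {1,…,N} joining the block of t_A and the block of t_B containing it, is a cycle graph. Then for every q∈P_N: d(t_A,q)+d(q,t_B)≥d(t_A,t_B)+2(1−δ_{#₁(q),0}); that is, the triangle inequality is improved by 2 whenever q has at least one singlet. -/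
open scoped Classical

noncomputable section

namespace ITIC

variable {α : Type*}

/-- The setoid obtained from `p` by merging the classes of `i` and `j`. -/
def merged (p : Setoid α) (i j : α) : Setoid α where
  r x y := p.r x y ∨ (p.r x i ∧ p.r j y) ∨ (p.r x j ∧ p.r i y)
  iseqv := by
    refine ⟨fun x => Or.inl (p.iseqv.refl x), ?_, ?_⟩
    · rintro x y (h | ⟨h1, h2⟩ | ⟨h1, h2⟩)
      · exact Or.inl (p.iseqv.symm h)
      · exact Or.inr (Or.inr ⟨p.iseqv.symm h2, p.iseqv.symm h1⟩)
      · exact Or.inr (Or.inl ⟨p.iseqv.symm h2, p.iseqv.symm h1⟩)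
    · have T : ∀ {a b c : α}, p.r a b → p.r b c → p.r a c := fun h h' => p.iseqv.trans h h'
      have S : ∀ {a b : α}, p.r a b → p.r b a := fun h => p.iseqv.symm h
      rintro x y z (h | ⟨h1, h2⟩ | ⟨h1, h2⟩) (h' | ⟨h1', h2'⟩ | ⟨h1', h2'⟩)
      · exact Or.inl (T h h')
      · exact Or.inr (Or.inl ⟨T h h1', h2'⟩)
      · exact Or.inr (Or.inr ⟨T h h1', h2'⟩)
      · exact Or.inr (Or.inl ⟨h1, T h2 h'⟩)
      · exact Or.inl (T h1 (T (S (T h2 h1')) h2'))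
      · exact Or.inl (T h1 h2')
      · exact Or.inr (Or.inr ⟨h1, T h2 h'⟩)
      · exact Or.inl (T h1 h2')
      · exact Or.inl (T h1 (T (S (T h2 h1')) h2'))

lemma le_merged (p : Setoid α) (i j : α) : p ≤ merged p i j := fun _ _ h => Or.inl h

lemma merged_le {p r : Setoid α} {i j : α} (h : p ≤ r) (hij : r.r i j) :
    merged p i j ≤ r := by
  rintro x y (hh | ⟨h1, h2⟩ | ⟨h1, h2⟩)
  · exact h hh
  · exact r.iseqv.trans (h h1) (r.iseqv.trans hij (h h2))
  · exact r.iseqv.trans (h h1) (r.iseqv.trans (r.iseqv.symm hij) (h h2))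

lemma merged_rel (p : Setoid α) (i j : α) : (merged p i j).r i j :=
  Or.inr (Or.inl ⟨p.iseqv.refl i, p.iseqv.refl j⟩)

lemma merged_eq_self {p : Setoid α} {i j : α} (h : p.r i j) : merged p i j = p :=
  le_antisymm (merged_le le_rfl h) (le_merged p i j)

lemma merged_mono {p p' : Setoid α} (i j : α) (h : p ≤ p') :
    merged p i j ≤ merged p' i j := by
  rintro x y (hh | ⟨h1, h2⟩ | ⟨h1, h2⟩)
  · exact Or.inl (h hh)
  · exact Or.inr (Or.inl ⟨h h1, h h2⟩)
  · exact Or.inr (Or.inr ⟨h h1, h h2⟩)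

lemma card_merged [Fintype α] (p : Setoid α) (i j : α) (hij : ¬ p.r i j) :
    Nat.card (Quotient (merged p i j)) + 1 = Nat.card (Quotient p) := by
  classical
  set M := merged p i j with hM
  let F : Quotient p → Quotient M :=
    Quot.lift (fun x => Quotient.mk M x) (fun a b hab => Quotient.sound (Or.inl hab))
  have hbij : Function.Bijective
      (fun u : {u : Quotient p // u ≠ Quotient.mk p j} => F u.1) := by
    constructor
    · rintro ⟨u, hu⟩ ⟨v, hv⟩ h
      obtain ⟨a, rfl⟩ := Quotient.exists_rep u
      obtain ⟨b, rfl⟩ := Quotient.exists_rep v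
      have hab : M.r a b := Quotient.exact h
      rcases hab with hh | ⟨h1, h2⟩ | ⟨h1, h2⟩
      · exact Subtype.ext (Quotient.sound hh)
      · exact absurd (Quotient.sound (p.iseqv.symm h2)) hv
      · exact absurd (Quotient.sound h1) hu
    · intro v
      obtain ⟨x, rfl⟩ := Quotient.exists_rep v
      by_cases hx : p.r j x
      · refine ⟨⟨Quotient.mk p i, fun h => hij (Quotient.exact h)⟩, ?_⟩
        exact Quotient.sound (Or.inr (Or.inl ⟨p.iseqv.refl i, hx⟩))
      · refine ⟨⟨Quotient.mk p x, fun h => hx (p.iseqv.symm (Quotient.exact h))⟩, rfl⟩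
  have e : {u : Quotient p // u ≠ Quotient.mk p j} ≃ Quotient M := Equiv.ofBijective _ hbij
  have h1 : Nat.card (Quotient M) = Nat.card {u : Quotient p // u ≠ Quotient.mk p j} :=
    (Nat.card_congr e).symm
  rw [h1]
  rw [Nat.card_eq_fintype_card, Nat.card_eq_fintype_card]
  have h2 : Fintype.card {u : Quotient p // ¬ u = Quotient.mk p j} =
      Fintype.card (Quotient p) - Fintype.card {u : Quotient p // u = Quotient.mk p j} :=
    Fintype.card_subtype_compl _
  have h3 : Fintype.card {u : Quotient p // u = Quotient.mk p j} = 1 :=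
    Fintype.card_subtype_eq _
  have h4 : 0 < Fintype.card (Quotient p) :=
    Fintype.card_pos_iff.mpr ⟨Quotient.mk p j⟩
  have : Fintype.card {u : Quotient p // u ≠ Quotient.mk p j} =
      Fintype.card (Quotient p) - 1 := by
    simpa [h3] using h2
  omega

/-- Merging a list of pairs successively. -/
def mergeList (p : Setoid α) : List (α × α) → Setoid α
  | [] => p
  | e :: L => mergeList (merged p e.1 e.2) L

lemma le_mergeList (p : Setoid α) (L : List (α × α)) : p ≤ mergeList p L := by
  induction L generalizing p with
  | nil => exact le_rfl
  | cons e L ih => exact le_trans (le_merged p e.1 e.2) (ih _)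

lemma mergeList_le {r : Setoid α} (p : Setoid α) (L : List (α × α))
    (h : ∀ e ∈ L, r.r e.1 e.2) (hpr : p ≤ r) : mergeList p L ≤ r := by
  induction L generalizing p with
  | nil => exact hpr
  | cons e L ih =>
      exact ih _ (fun e' he' => h e' (List.mem_cons_of_mem _ he'))
        (merged_le hpr (h e List.mem_cons_self))

lemma rel_mergeList_of_mem (p : Setoid α) (L : List (α × α)) {e : α × α} (he : e ∈ L) :
    (mergeList p L).r e.1 e.2 := by
  induction L generalizing p with
  | nil => exact absurd he List.not_mem_nil
  | cons a L ih =>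
      rcases List.mem_cons.mp he with rfl | he'
      · exact le_mergeList (merged p e.1 e.2) L (merged_rel p e.1 e.2)
      · exact ih _ he'

lemma sup_eq_mergeList [Fintype α] (p x : Setoid α) :
    p ⊔ x = mergeList p
      ((Finset.univ.filter (fun e : α × α => x.r e.1 e.2)).toList) := by
  classical
  apply le_antisymm
  · apply sup_le
    · exact le_mergeList _ _
    · intro a b hab
      exact rel_mergeList_of_mem p _ (e := (a, b)) (by
        simp [Finset.mem_toList, Finset.mem_filter, hab])
  · refine mergeList_le p _ (fun e he => ?_) le_sup_left
    have : x.r e.1 e.2 := by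
      simpa [Finset.mem_toList, Finset.mem_filter] using he
    exact (le_sup_right : x ≤ p ⊔ x) this

lemma rank_step [Fintype α] (p : Setoid α) (i j : α) :
    (Nat.card (Quotient p) : ℤ) - Nat.card (Quotient (merged p i j)) =
      if p.r i j then 0 else 1 := by
  by_cases h : p.r i j
  · simp [merged_eq_self h, h]
  · rw [if_neg h, ← card_merged p i j h]
    push_cast
    ring

lemma rank_mono [Fintype α] (L : List (α × α)) (p p' : Setoid α) (h : p ≤ p') :
    (Nat.card (Quotient p') : ℤ) - Nat.card (Quotient (mergeList p' L)) ≤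
      (Nat.card (Quotient p) : ℤ) - Nat.card (Quotient (mergeList p L)) := by
  induction L generalizing p p' with
  | nil => simp [mergeList]
  | cons e L ih =>
      have h1 := rank_step p e.1 e.2
      have h2 := rank_step p' e.1 e.2
      have hstep : ((if p'.r e.1 e.2 then (0:ℤ) else 1)) ≤
          (if p.r e.1 e.2 then (0:ℤ) else 1) := by
        by_cases hp : p.r e.1 e.2
        · simp [hp, h hp]
        · split <;> norm_num
      have h3 := ih (merged p e.1 e.2) (merged p' e.1 e.2) (merged_mono e.1 e.2 h)
      show (Nat.card (Quotient p') : ℤ) -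
          Nat.card (Quotient (mergeList (merged p' e.1 e.2) L)) ≤
        (Nat.card (Quotient p) : ℤ) -
          Nat.card (Quotient (mergeList (merged p e.1 e.2) L))
      linarith

/-- The key submodularity inequality for numbers of blocks. -/
lemma star [Fintype α] (q x y : Setoid α) :
    (Nat.card (Quotient (q ⊔ x)) : ℤ) + Nat.card (Quotient (q ⊔ y)) ≤
      Nat.card (Quotient q) + Nat.card (Quotient (q ⊔ x ⊔ y)) := by
  classical
  set L := (Finset.univ.filter (fun e : α × α => x.r e.1 e.2)).toList with hL
  have h1 : q ⊔ x = mergeList q L := sup_eq_mergeList q x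
  have h2 : (q ⊔ y) ⊔ x = mergeList (q ⊔ y) L := sup_eq_mergeList (q ⊔ y) x
  have h3 : q ⊔ x ⊔ y = (q ⊔ y) ⊔ x := sup_right_comm q x y
  have := rank_mono L q (q ⊔ y) le_sup_left
  rw [← h1, ← h2, ← h3] at this
  linarith

lemma even_card_closed [Fintype α] (p : Setoid α) (h2 : ∀ x, RTN.blockSize p x = 2)
    (S : Finset α) (hcl : ∀ x ∈ S, ∀ y, p.r x y → y ∈ S) : Even S.card := by
  classical
  rw [Finset.card_eq_sum_card_fiberwise
    (f := Quotient.mk p) (t := (S.image (Quotient.mk p)))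
    (fun x hx => Finset.mem_image_of_mem _ hx)]
  have hconst : ∀ u ∈ S.image (Quotient.mk p),
      (S.filter (fun x => Quotient.mk p x = u)).card = 2 := by
    intro u hu
    obtain ⟨x₀, hx₀S, rfl⟩ := Finset.mem_image.mp hu
    have hset : S.filter (fun x => Quotient.mk p x = Quotient.mk p x₀) =
        Finset.univ.filter (fun y => p.r x₀ y) := by
      ext y
      simp only [Finset.mem_filter, Finset.mem_univ, true_and]
      constructor
      · rintro ⟨-, h⟩
        exact p.iseqv.symm (Quotient.exact h)
      · intro hy
        exact ⟨hcl x₀ hx₀S y hy, Quotient.sound (p.iseqv.symm hy)⟩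
    rw [hset]
    have := h2 x₀
    unfold RTN.blockSize at this
    rw [Nat.card_eq_fintype_card, Fintype.card_subtype] at this
    exact this
  rw [Finset.sum_congr rfl hconst, Finset.sum_const, smul_eq_mul]
  exact ⟨(S.image (Quotient.mk p)).card, by ring⟩

lemma isSinglet_sup {p q : Setoid α} {k : α}
    (hp : RTN.IsSinglet p k) (hq : RTN.IsSinglet q k) : RTN.IsSinglet (p ⊔ q) k := by
  intro y hy
  rw [Setoid.sup_eq_eqvGen] at hy
  have key : ∀ a b, Relation.EqvGen (fun x y => p x y ∨ q x y) a b → (a = k ↔ b = k) := by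
    intro a b h
    induction h with
    | rel a b hab =>
        constructor
        · rintro rfl
          rcases hab with h | h
          · exact hp b h
          · exact hq b h
        · rintro rfl
          rcases hab with h | h
          · exact hp a (p.iseqv.symm h)
          · exact hq a (q.iseqv.symm h)
    | refl a => exact Iff.rfl
    | symm a b _ ih => exact ih.symm
    | trans a b c _ _ ih1 ih2 => exact ih1.trans ih2
  exact (key k y hy).mp rfl

lemma nb_top_eq_one {α : Type*} [Nonempty α] : RTN.nb (⊤ : Setoid α) = 1 := by
  unfold RTN.nb
  norm_cast
  rw [Nat.card_eq_one_iff_unique]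
  constructor
  · constructor
    intro a b
    obtain ⟨x, rfl⟩ := Quotient.exists_rep a
    obtain ⟨y, rfl⟩ := Quotient.exists_rep b
    exact Quotient.sound trivial
  · exact ⟨Quotient.mk _ (Classical.arbitrary α)⟩

/-- The setoid obtained from `p` by splitting `k` off into its own class. -/
def split (p : Setoid α) (k : α) : Setoid α where
  r x y := p.r x y ∧ (x = k ↔ y = k)
  iseqv := ⟨fun x => ⟨p.iseqv.refl x, Iff.rfl⟩,
    fun h => ⟨p.iseqv.symm h.1, h.2.symm⟩,
    fun h h' => ⟨p.iseqv.trans h.1 h'.1, h.2.trans h'.2⟩⟩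

lemma split_le (p : Setoid α) (k : α) : split p k ≤ p := fun _ _ h => h.1

lemma isSinglet_split (p : Setoid α) (k : α) : RTN.IsSinglet (split p k) k :=
  fun _ hy => hy.2.mp rfl

end ITIC

/-- If `t_A ∧ t_B = id` and the associated bipartite block graph is a
cycle graph (every block of `t_A` and `t_B` has size two, and `t_A ⊔ t_B = ⊤`, i.e. the
graph is 2-regular and connected), then for every `q ∈ P_N`:
`d(t_A,q) + d(q,t_B) ≥ d(t_A,t_B) + 2(1 - δ_{#₁(q),0})`. -/
theorem improved_triangle_inequality_cycle {N : ℕ} (hN : 0 < N)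
    (tA tB : Setoid (Fin N))
    (hmeet : tA ⊓ tB = ⊥)
    (hA2 : ∀ x, RTN.blockSize tA x = 2)
    (hB2 : ∀ x, RTN.blockSize tB x = 2)
    (hconn : tA ⊔ tB = ⊤)
    (q : Setoid (Fin N)) :
    RTN.pdist tA q + RTN.pdist q tB ≥
      RTN.pdist tA tB + 2 * (1 - if RTN.nS q = 0 then (1 : ℤ) else 0) := by
  classical
  have hne : Nonempty (Fin N) := ⟨⟨0, hN⟩⟩
  have htop : (Nat.card (Quotient (⊤ : Setoid (Fin N))) : ℤ) = 1 := by
    simpa [RTN.nb] using (ITIC.nb_top_eq_one (α := Fin N))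
  suffices h : (Nat.card (Quotient (q ⊔ tA)) : ℤ) + Nat.card (Quotient (q ⊔ tB)) ≤
      Nat.card (Quotient q) + (if RTN.nS q = 0 then (1 : ℤ) else 0) by
    unfold RTN.pdist RTN.nb
    rw [sup_comm tA q, hconn, htop]
    linarith
  by_cases hs : RTN.nS q = 0
  · -- no singlet: plain triangle inequality from submodularity
    have hstar := ITIC.star q tA tB
    rw [sup_assoc, hconn, sup_top_eq] at hstar
    rw [if_pos hs]
    have h1 := htop
    linarith
  · -- there is a singlet k
    rw [if_neg hs]
    have hk' : Nat.card {k : Fin N // RTN.IsSinglet q k} ≠ 0 := by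
      intro h0
      apply hs
      unfold RTN.nS
      exact_mod_cast congrArg (Nat.cast (R := ℤ)) h0
    obtain ⟨⟨⟨k, hk⟩⟩, -⟩ := Nat.card_ne_zero.mp hk'
    -- the tB-partner j of k
    have hB2k := hB2 k
    unfold RTN.blockSize at hB2k
    have hCcard : (Finset.univ.filter (fun y => tB.r k y)).card = 2 := by
      rw [← Fintype.card_subtype, ← Nat.card_eq_fintype_card]
      exact hB2k
    have hkC : k ∈ Finset.univ.filter (fun y => tB.r k y) := by
      simp [tB.iseqv.refl k]
    obtain ⟨j, hjC, hjk⟩ := Finset.exists_mem_ne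
      (s := Finset.univ.filter (fun y => tB.r k y)) (by omega) k
    have hkj : tB.r k j := by simpa using hjC
    have hclass : ∀ y, tB.r k y → y = k ∨ y = j := by
      intro y hy
      have hsub : ({k, j} : Finset (Fin N)) ⊆ Finset.univ.filter (fun y => tB.r k y) := by
        intro z hz
        rcases Finset.mem_insert.mp hz with rfl | hz'
        · exact hkC
        · rw [Finset.mem_singleton] at hz'
          subst hz'
          simpa using hkj
      have heq : ({k, j} : Finset (Fin N)) = Finset.univ.filter (fun y => tB.r k y) :=
        Finset.eq_of_subset_of_card_le hsub (by rw [hCcard, Finset.card_pair (Ne.symm hjk)])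
      have : y ∈ ({k, j} : Finset (Fin N)) := by rw [heq]; simpa using hy
      simpa using this
    set tB' := ITIC.split tB k with htB'def
    have htB'le : tB' ≤ tB := ITIC.split_le tB k
    have hsingle' : RTN.IsSinglet tB' k := ITIC.isSinglet_split tB k
    have htB'r : ∀ x y, x ≠ k → x ≠ j → tB.r x y → tB'.r x y := by
      intro x y hxk hxj hxy
      have hyk : y ≠ k := by
        rintro rfl
        rcases hclass x (tB.iseqv.symm hxy) with h | h
        · exact hxk h
        · exact hxj h
      exact ⟨hxy, ⟨fun h => absurd h hxk, fun h => absurd h hyk⟩⟩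
    have key1 : ∀ s : Setoid (Fin N), tB' ≤ s → tB ≤ ITIC.merged s k j := by
      intro s hs' x y hxy
      rcases eq_or_ne x k with hxk | hxk
      · rcases hclass y (hxk ▸ hxy) with hy | hy
        · rw [hxk, hy]
        · rw [hxk, hy]
          exact ITIC.merged_rel s k j
      · rcases eq_or_ne y k with hyk | hyk
        · rcases hclass x (tB.iseqv.symm (hyk ▸ hxy)) with hx | hx
          · exact absurd hx hxk
          · rw [hx, hyk]
            exact (ITIC.merged s k j).iseqv.symm (ITIC.merged_rel s k j)
        · rcases eq_or_ne x j with hxj | hxj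
          · rcases hclass y (tB.iseqv.trans hkj (hxj ▸ hxy)) with hy | hy
            · exact absurd hy hyk
            · rw [hxj, hy]
          · exact ITIC.le_merged s k j (hs' (htB'r x y hxk hxj hxy))
    have hmerge : q ⊔ tB = ITIC.merged (q ⊔ tB') k j := by
      apply le_antisymm
      · apply sup_le
        · exact le_trans le_sup_left (ITIC.le_merged _ k j)
        · exact key1 (q ⊔ tB') le_sup_right
      · apply ITIC.merged_le (sup_le_sup_left htB'le q)
        exact (le_sup_right : tB ≤ q ⊔ tB) hkj
    have hknotrel : ¬ (q ⊔ tB').r k j := by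
      intro h
      exact hjk (ITIC.isSinglet_sup hk hsingle' j h)
    have hcard1 : Nat.card (Quotient (q ⊔ tB)) + 1 = Nat.card (Quotient (q ⊔ tB')) := by
      rw [hmerge]
      exact ITIC.card_merged _ k j hknotrel
    have hstar := ITIC.star q tA tB'
    have htAB' : tA ⊔ tB' = ⊤ := by
      have hM : ITIC.merged (tA ⊔ tB') k j = ⊤ := by
        apply top_unique
        rw [← hconn]
        apply sup_le
        · exact le_trans le_sup_left (ITIC.le_merged _ k j)
        · exact key1 _ le_sup_right
      by_cases hc : (tA ⊔ tB').r k j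
      · rw [ITIC.merged_eq_self hc] at hM
        exact hM
      · exfalso
        set S := Finset.univ.filter (fun y => (tA ⊔ tB').r k y) with hS
        have hkS : k ∈ S := by
          simp only [hS, Finset.mem_filter, Finset.mem_univ, true_and]
          exact (tA ⊔ tB').iseqv.refl k
        have hjS : j ∉ S := by
          simp only [hS, Finset.mem_filter, Finset.mem_univ, true_and]
          exact hc
        have hSclosed : ∀ x ∈ S, ∀ y, tA.r x y → y ∈ S := by
          intro x hx y hxy
          simp only [hS, Finset.mem_filter, Finset.mem_univ, true_and] at hx ⊢
          exact (tA ⊔ tB').iseqv.trans hx ((le_sup_left : tA ≤ tA ⊔ tB') hxy)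
        have hEvenS : Even S.card := ITIC.even_card_closed tA hA2 S hSclosed
        have hS'closed : ∀ x ∈ S.erase k, ∀ y, tB.r x y → y ∈ S.erase k := by
          intro x hx y hxy
          have hxk : x ≠ k := (Finset.mem_erase.mp hx).1
          have hxS : x ∈ S := (Finset.mem_erase.mp hx).2
          have hxj : x ≠ j := fun h => hjS (h ▸ hxS)
          have h' : tB'.r x y := htB'r x y hxk hxj hxy
          have hyS : y ∈ S := by
            simp only [hS, Finset.mem_filter, Finset.mem_univ, true_and] at hxS ⊢
            exact (tA ⊔ tB').iseqv.trans hxS ((le_sup_right : tB' ≤ tA ⊔ tB') h')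
          have hyk : y ≠ k := by
            rintro rfl
            rcases hclass x (tB.iseqv.symm hxy) with h | h
            · exact hxk h
            · exact hxj h
          exact Finset.mem_erase.mpr ⟨hyk, hyS⟩
        have hEvenS' : Even (S.erase k).card := ITIC.even_card_closed tB hB2 _ hS'closed
        have hcount : (S.erase k).card + 1 = S.card := by
          rw [Finset.card_erase_of_mem hkS]
          have := Finset.card_pos.mpr ⟨k, hkS⟩
          omega
        obtain ⟨a, ha⟩ := hEvenS
        obtain ⟨b, hb⟩ := hEvenS'
        omega
    have hTtop : q ⊔ tA ⊔ tB' = ⊤ := by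
      rw [sup_assoc, htAB', sup_top_eq]
    rw [hTtop, htop] at hstar
    have hc1 : (Nat.card (Quotient (q ⊔ tB)) : ℤ) + 1 = Nat.card (Quotient (q ⊔ tB')) := by
      exact_mod_cast hcard1
    linarith
end
end
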